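/- Let R be a projective-free ring: every projective left R-module is free. Then every finitely generated left R-module is cyclic (R is strongly Bezout on the left) if and only if there exists a natural number n ≥ 2 and a left R-module isomorphism R ≃ₗ[R] (Fin n → R); i.e., a projective-free algebra has module type (1, n) for some n ≥ 2 if and only if it is strongly Bezout. -/

import Mathlib

universe u

/-- A projective-free ring (every projective left module is free) is strongly Bezout
(every finitely generated left module is cyclic) if and only if it has module type `(1, n)`
for some `n ≥ 2`, i.e. `R ≅ Rⁿ` as left `R`-modules for some `n ≥ 2`. -/
theorem stmt4 (R : Type u) [Ring R]
    (hpf : ∀ (M : Type u) [AddCommGroup M] [Module R M],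
      Module.Projective R M → Module.Free R M) :
    (∀ (M : Type u) [AddCommGroup M] [Module R M], Module.Finite R M →
      ∃ m : M, Submodule.span R {m} = ⊤) ↔
    ∃ n : ℕ, 2 ≤ n ∧ Nonempty (R ≃ₗ[R] (Fin n → R)) := by
  constructor
  · intro H
    obtain ⟨m, hm⟩ := H (Fin 2 → R) inferInstance
    set f := LinearMap.toSpanSingleton R (Fin 2 → R) m with hf
    have hfsurj : Function.Surjective f := by
      rw [← LinearMap.range_eq_top, ← LinearMap.span_singleton_eq_range]
      exact hm
    obtain ⟨s, hs⟩ := Module.projective_lifting_property f LinearMap.id hfsurj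
    have e : (↥(LinearMap.ker f) × (Fin 2 → R)) ≃ₗ[R] R :=
      lequivProdOfRightSplitExact (LinearMap.ker f).injective_subtype
        (Submodule.range_subtype _) hs
    -- ker f is a direct summand of R : finite and projective
    have hretr : (LinearMap.fst R (↥(LinearMap.ker f)) (Fin 2 → R) ∘ₗ e.symm.toLinearMap).comp
        (e.toLinearMap ∘ₗ LinearMap.inl R (↥(LinearMap.ker f)) (Fin 2 → R)) = LinearMap.id := by
      ext x
      simp
    have hfin : Module.Finite R (↥(LinearMap.ker f)) :=
      Module.Finite.of_surjective (LinearMap.fst R (↥(LinearMap.ker f)) (Fin 2 → R) ∘ₗ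
        e.symm.toLinearMap) (by
          intro y
          exact ⟨e (y, 0), by simp⟩)
    have hproj : Module.Projective R (↥(LinearMap.ker f)) :=
      Module.Projective.of_split _ _ hretr
    have hfree : Module.Free R (↥(LinearMap.ker f)) := hpf _ hproj
    set b := Module.Free.chooseBasis R (↥(LinearMap.ker f)) with hb
    set k := Fintype.card (Module.Free.ChooseBasisIndex R (↥(LinearMap.ker f))) with hk
    refine ⟨k + 2, by omega, ⟨?_⟩⟩
    exact e.symm.trans <|
      (LinearEquiv.prodCongr (b.equivFun.trans
        (LinearEquiv.funCongrLeft R R (Fintype.equivFin _).symm)) (LinearEquiv.refl R _)).trans <|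
      ((LinearEquiv.sumArrowLequivProdArrow (Fin k) (Fin 2) R R).symm).trans <|
      LinearEquiv.funCongrLeft R R finSumFinEquiv.symm
  · rintro ⟨n, hn, ⟨e⟩⟩
    intro M _ _ hM
    obtain ⟨k, g, hg⟩ := Module.Finite.exists_fin' R M
    have key : ∀ j : ℕ, ∃ p : R →ₗ[R] (Fin j → R), Function.Surjective p := by
      intro j
      induction j with
      | zero => exact ⟨0, fun x => ⟨0, funext fun i => i.elim0⟩⟩
      | succ j ih =>
        obtain ⟨p, hp⟩ := ih
        -- q : R →ₗ R × R surjective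
        have hq : Function.Surjective
            ((LinearMap.proj (⟨0, by omega⟩ : Fin n)).prod
              (LinearMap.proj (⟨1, by omega⟩ : Fin n)) ∘ₗ e.toLinearMap) := by
          rintro ⟨a, c⟩
          refine ⟨e.symm (fun i => if i = ⟨0, by omega⟩ then a
            else if i = ⟨1, by omega⟩ then c else 0), ?_⟩
          have h01 : (⟨1, by omega⟩ : Fin n) ≠ ⟨0, by omega⟩ := by
            simp [Fin.ext_iff]
          simp [h01]
        set E : (R × (Fin j → R)) ≃ₗ[R] (Fin (j + 1) → R) :=
          ((LinearEquiv.funUnique (Fin 1) R R).symm.prodCongr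
            (LinearEquiv.refl R (Fin j → R))).trans
          (((LinearEquiv.sumArrowLequivProdArrow (Fin 1) (Fin j) R R).symm).trans
            (LinearEquiv.funCongrLeft R R ((finCongr (by omega : j + 1 = 1 + j)).trans
              finSumFinEquiv.symm)))
        refine ⟨E.toLinearMap ∘ₗ (LinearMap.id.prodMap p) ∘ₗ
          ((LinearMap.proj (⟨0, by omega⟩ : Fin n)).prod
            (LinearMap.proj (⟨1, by omega⟩ : Fin n)) ∘ₗ e.toLinearMap), ?_⟩
        exact E.surjective.comp ((Function.Surjective.prodMap Function.surjective_id hp).comp hq)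
    obtain ⟨p, hp⟩ := key k
    have hsurj : Function.Surjective (g ∘ₗ p) := hg.comp hp
    refine ⟨(g ∘ₗ p) 1, ?_⟩
    rw [eq_top_iff]
    rintro x -
    obtain ⟨r, rfl⟩ := hsurj x
    have : (g ∘ₗ p) r = r • (g ∘ₗ p) 1 := by rw [← map_smul, smul_eq_mul, mul_one]
    rw [this]
    exact Submodule.smul_mem _ r (Submodule.mem_span_singleton_self _)
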